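/- For d ≥ 2 and sufficiently large n, let S ⊂ ℝ^d be the sphere of radius (√d/2)·n centered at the origin, let R = d·n^{1-μ} for some μ ∈ [0,1), and let P be the circumscribed polytope of S formed by all tangent hyperplanes with normal vectors in N(R) = {b ∈ ℤ^d : gcd(b₁,...,b_d) = 1, ‖b‖ ≤ R}. Then every facet of P has (Euclidean) diameter less than n^μ. -/

import Mathlib

open Real

/-- `b` is a primitive integer vector of Euclidean norm at most `R`. -/
def IsPrimitiveShort (d : ℕ) (R : ℝ) (b : Fin d → ℤ) : Prop :=
  b ≠ 0 ∧ Finset.univ.gcd (fun i => (b i).natAbs) = 1 ∧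
    Real.sqrt (∑ i, ((b i : ℝ)) ^ 2) ≤ R

/-- `x` lies in the circumscribed polytope of the sphere of radius `ρ` (centered at the
origin) formed by all tangent hyperplanes with normal vectors in `N(R)`. -/
def InCircumPolytope (d : ℕ) (R ρ : ℝ) (x : Fin d → ℝ) : Prop :=
  ∀ b : Fin d → ℤ, IsPrimitiveShort d R b →
    (∑ i, (b i : ℝ) * x i) ≤ ρ * Real.sqrt (∑ i, ((b i : ℝ)) ^ 2)


-- triangle inequality for sqrt-sum distances
lemma tri_aux {d : ℕ} (x y z : Fin d → ℝ) :
    Real.sqrt (∑ i, (x i - y i) ^ 2) ≤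
      Real.sqrt (∑ i, (x i - z i) ^ 2) + Real.sqrt (∑ i, (z i - y i) ^ 2) := by
  let x' : EuclideanSpace ℝ (Fin d) := WithLp.toLp 2 x
  let y' : EuclideanSpace ℝ (Fin d) := WithLp.toLp 2 y
  let z' : EuclideanSpace ℝ (Fin d) := WithLp.toLp 2 z
  have h := dist_triangle x' z' y'
  simpa [EuclideanSpace.dist_eq, Real.dist_eq, sq_abs, x', y', z'] using h

-- Cauchy–Schwarz
lemma cs_aux {d : ℕ} (f g : Fin d → ℝ) :
    (∑ i, f i * g i) ≤ Real.sqrt (∑ i, f i ^ 2) * Real.sqrt (∑ i, g i ^ 2) :=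
  Real.sum_mul_le_sqrt_mul_sqrt _ _ _

lemma constraint_all {d : ℕ} {R ρ : ℝ} {x : Fin d → ℝ}
    (hx : InCircumPolytope d R ρ x) (c : Fin d → ℤ) (hc : c ≠ 0)
    (hcR : Real.sqrt (∑ i, ((c i : ℝ)) ^ 2) ≤ R) :
    (∑ i, (c i : ℝ) * x i) ≤ ρ * Real.sqrt (∑ i, ((c i : ℝ)) ^ 2) := by
  set g : ℕ := Finset.univ.gcd (fun i => (c i).natAbs) with hg
  have hgdvd : ∀ i, (g : ℤ) ∣ c i := by
    intro i
    have h1 : g ∣ (c i).natAbs := Finset.gcd_dvd (Finset.mem_univ i)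
    exact Int.dvd_natAbs.mp (Int.natCast_dvd_natCast.mpr h1)
  have hg0 : g ≠ 0 := by
    intro h0
    apply hc
    funext i
    have := Finset.gcd_eq_zero_iff.mp (hg ▸ h0) i (Finset.mem_univ i)
    simpa [Int.natAbs_eq_zero] using this
  set b : Fin d → ℤ := fun i => c i / (g : ℤ) with hb
  have hcb : ∀ i, c i = (g : ℤ) * b i := fun i =>
    (Int.mul_ediv_cancel' (hgdvd i)).symm
  have hnat : ∀ i, (c i).natAbs = g * (b i).natAbs := by
    intro i
    rw [hcb i, Int.natAbs_mul, Int.natAbs_natCast]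
  have hgcdb : Finset.univ.gcd (fun i => (b i).natAbs) = 1 := by
    have : Finset.univ.gcd (fun i => (c i).natAbs)
        = g * Finset.univ.gcd (fun i => (b i).natAbs) := by
      rw [show (fun i => (c i).natAbs) = (fun i => g * (b i).natAbs) from funext hnat]
      simpa using (Finset.gcd_mul_left (s := (Finset.univ : Finset (Fin d)))
        (f := fun i => (b i).natAbs) (a := g))
    have h1 : g * 1 = g * Finset.univ.gcd (fun i => (b i).natAbs) := by
      rw [← this, mul_one]
    exact (mul_left_cancel₀ hg0 h1).symm
  have hb0 : b ≠ 0 := by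
    intro h0
    apply hc
    funext i
    rw [hcb i, h0]
    simp
  have hg1 : (1 : ℝ) ≤ (g : ℝ) := by exact_mod_cast Nat.one_le_iff_ne_zero.mpr hg0
  have hsum : ∀ i, ((c i : ℝ)) ^ 2 = (g : ℝ) ^ 2 * ((b i : ℝ)) ^ 2 := by
    intro i
    rw [hcb i]
    push_cast
    ring
  have hnorm : Real.sqrt (∑ i, ((c i : ℝ)) ^ 2)
      = (g : ℝ) * Real.sqrt (∑ i, ((b i : ℝ)) ^ 2) := by
    rw [Finset.sum_congr rfl (fun i _ => hsum i), ← Finset.mul_sum,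
      Real.sqrt_mul (by positivity), Real.sqrt_sq (by positivity)]
  have hbR : Real.sqrt (∑ i, ((b i : ℝ)) ^ 2) ≤ R := by
    calc Real.sqrt (∑ i, ((b i : ℝ)) ^ 2)
        ≤ (g : ℝ) * Real.sqrt (∑ i, ((b i : ℝ)) ^ 2) :=
          le_mul_of_one_le_left (Real.sqrt_nonneg _) hg1
      _ = Real.sqrt (∑ i, ((c i : ℝ)) ^ 2) := hnorm.symm
      _ ≤ R := hcR
  have hmain := hx b ⟨hb0, hgcdb, hbR⟩
  have hcx : (∑ i, (c i : ℝ) * x i) = (g : ℝ) * ∑ i, (b i : ℝ) * x i := by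
    rw [Finset.mul_sum]
    refine Finset.sum_congr rfl fun i _ => ?_
    rw [hcb i]
    push_cast
    ring
  rw [hcx, hnorm]
  calc (g : ℝ) * ∑ i, (b i : ℝ) * x i
      ≤ (g : ℝ) * (ρ * Real.sqrt (∑ i, ((b i : ℝ)) ^ 2)) :=
        mul_le_mul_of_nonneg_left hmain (by positivity)
    _ = ρ * ((g : ℝ) * Real.sqrt (∑ i, ((b i : ℝ)) ^ 2)) := by ring

set_option maxHeartbeats 1000000 in
lemma norm_bound {d : ℕ} {R ρ : ℝ} {x : Fin d → ℝ} (hρ : 0 ≤ ρ)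
    (hcon : ∀ c : Fin d → ℤ, c ≠ 0 → Real.sqrt (∑ i, ((c i : ℝ)) ^ 2) ≤ R →
      (∑ i, (c i : ℝ) * x i) ≤ ρ * Real.sqrt (∑ i, ((c i : ℝ)) ^ 2))
    (hX : 0 < Real.sqrt (∑ i, x i ^ 2))
    (hRd : Real.sqrt d < R) :
    (∑ i, x i ^ 2) ≤ ρ ^ 2 + (ρ * (Real.sqrt d / 2) / (R - Real.sqrt d)) ^ 2 := by
  set X : ℝ := Real.sqrt (∑ i, x i ^ 2) with hXdef
  have hXne : X ≠ 0 := ne_of_gt hX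
  have hX2 : X ^ 2 = ∑ i, x i ^ 2 := Real.sq_sqrt (by positivity)
  have hd0 : (0 : ℝ) ≤ Real.sqrt d := Real.sqrt_nonneg _
  set s : ℝ := Real.sqrt d / 2 with hsdef
  have hs0 : 0 ≤ s := by positivity
  have hs2 : s ^ 2 = (d : ℝ) / 4 := by
    rw [hsdef, div_pow, Real.sq_sqrt (Nat.cast_nonneg d)]
    norm_num
  set L : ℝ := R - s with hLdef
  have hLs : R - Real.sqrt d = L - s := by rw [hLdef, hsdef]; ring
  have hL0 : 0 < L - s := by rw [← hLs]; linarith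
  have hLpos : 0 < L := by linarith
  set c : Fin d → ℤ := fun i => round (L * x i / X) with hcdef
  set e : Fin d → ℝ := fun i => (c i : ℝ) - L * x i / X with hedef
  have hce : ∀ i, (c i : ℝ) = L * x i / X + e i := by
    intro i; rw [hedef]; ring
  have he : ∀ i, |e i| ≤ 1 / 2 := by
    intro i
    rw [hedef]
    have := abs_sub_round (L * x i / X)
    rw [abs_sub_comm] at this
    exact this
  have hesq : (∑ i, e i ^ 2) ≤ s ^ 2 := by
    rw [hs2]
    calc (∑ i, e i ^ 2) ≤ ∑ _i : Fin d, (1 / 2 : ℝ) ^ 2 := by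
          refine Finset.sum_le_sum fun i _ => ?_
          have h := abs_le.mp (he i)
          nlinarith [h.1, h.2]
      _ = (d : ℝ) / 4 := by
          simp [Finset.sum_const, Finset.card_univ]
          ring
  have hsee : Real.sqrt (∑ i, e i ^ 2) ≤ s := by
    calc Real.sqrt (∑ i, e i ^ 2) ≤ Real.sqrt (s ^ 2) := Real.sqrt_le_sqrt hesq
      _ = s := Real.sqrt_sq hs0
  set E : ℝ := ∑ i, e i * x i with hEdef
  have hEup : E ≤ s * X := by
    calc E ≤ Real.sqrt (∑ i, e i ^ 2) * Real.sqrt (∑ i, x i ^ 2) := cs_aux e x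
      _ ≤ s * X := mul_le_mul_of_nonneg_right hsee (Real.sqrt_nonneg _)
  have hElow : -(s * X) ≤ E := by
    have h1 : (∑ i, (-(e i)) * x i) ≤
        Real.sqrt (∑ i, (-(e i)) ^ 2) * Real.sqrt (∑ i, x i ^ 2) :=
      cs_aux (fun i => -(e i)) x
    have h2 : (∑ i, (-(e i)) * x i) = -E := by
      rw [hEdef, ← Finset.sum_neg_distrib]
      exact Finset.sum_congr rfl fun i _ => by ring
    have h3 : (∑ i, (-(e i)) ^ 2) = ∑ i, e i ^ 2 := by
      exact Finset.sum_congr rfl fun i _ => by ring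
    rw [h2, h3] at h1
    have h4 : -E ≤ s * X :=
      h1.trans (mul_le_mul_of_nonneg_right hsee (Real.sqrt_nonneg _))
    linarith
  have hEXup : E / X ≤ s := (div_le_iff₀ hX).mpr hEup
  have hEXlow : -s ≤ E / X := by
    rw [le_div_iff₀ hX]
    linarith
  set a : ℝ := L + E / X with hadef
  have ha_low : L - s ≤ a := by rw [hadef]; linarith
  have ha0 : 0 < a := lt_of_lt_of_le hL0 ha_low
  -- inner product with c
  have hcx : (∑ i, (c i : ℝ) * x i) = a * X := by
    have h1 : (∑ i, (c i : ℝ) * x i) = (L / X) * (∑ i, x i ^ 2) + E := by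
      rw [hEdef, Finset.mul_sum, ← Finset.sum_add_distrib]
      refine Finset.sum_congr rfl fun i _ => ?_
      rw [hce i]; ring
    rw [h1, ← hX2, hadef]
    field_simp
  -- squared norm of c
  have hC2 : (∑ i, ((c i : ℝ)) ^ 2)
      = L ^ 2 + 2 * L * (E / X) + ∑ i, e i ^ 2 := by
    have h1 : (∑ i, ((c i : ℝ)) ^ 2)
        = (L / X) ^ 2 * (∑ i, x i ^ 2) + (2 * L / X) * E + ∑ i, e i ^ 2 := by
      rw [hEdef, Finset.mul_sum, Finset.mul_sum, ← Finset.sum_add_distrib,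
        ← Finset.sum_add_distrib]
      refine Finset.sum_congr rfl fun i _ => ?_
      rw [hce i]; ring
    rw [h1, ← hX2]
    field_simp
  have hC2le1 : (∑ i, ((c i : ℝ)) ^ 2) ≤ (L + s) ^ 2 := by
    rw [hC2]; nlinarith [hEXup, hesq, hLpos]
  have hsqrtC2 : Real.sqrt (∑ i, ((c i : ℝ)) ^ 2) ≤ R := by
    calc Real.sqrt (∑ i, ((c i : ℝ)) ^ 2) ≤ Real.sqrt ((L + s) ^ 2) :=
        Real.sqrt_le_sqrt hC2le1
      _ = L + s := Real.sqrt_sq (by linarith)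
      _ = R := by rw [hLdef]; ring
  have hc0 : c ≠ 0 := by
    intro h0
    have hz : (∑ i, (c i : ℝ) * x i) = 0 := by
      rw [h0]; simp
    rw [hcx] at hz
    nlinarith [mul_pos ha0 hX]
  have hkey := hcon c hc0 hsqrtC2
  rw [hcx] at hkey
  have hC2nn : (0 : ℝ) ≤ ∑ i, ((c i : ℝ)) ^ 2 := by positivity
  have hkey2 : (a * X) ^ 2 ≤ ρ ^ 2 * (∑ i, ((c i : ℝ)) ^ 2) := by
    have h := mul_le_mul hkey hkey (mul_pos ha0 hX).le (mul_nonneg hρ (Real.sqrt_nonneg _))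
    calc (a * X) ^ 2 = (a * X) * (a * X) := by ring
      _ ≤ (ρ * Real.sqrt (∑ i, ((c i : ℝ)) ^ 2)) *
          (ρ * Real.sqrt (∑ i, ((c i : ℝ)) ^ 2)) := h
      _ = ρ ^ 2 * (Real.sqrt (∑ i, ((c i : ℝ)) ^ 2) *
          Real.sqrt (∑ i, ((c i : ℝ)) ^ 2)) := by ring
      _ = ρ ^ 2 * (∑ i, ((c i : ℝ)) ^ 2) := by
          rw [Real.mul_self_sqrt hC2nn]
  have hC2le2 : (∑ i, ((c i : ℝ)) ^ 2) ≤ a ^ 2 + s ^ 2 := by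
    rw [hC2, hadef]; nlinarith [hesq, sq_nonneg (E / X)]
  have hfin : a ^ 2 * X ^ 2 ≤ ρ ^ 2 * (a ^ 2 + s ^ 2) := by
    calc a ^ 2 * X ^ 2 = (a * X) ^ 2 := by ring
      _ ≤ ρ ^ 2 * (∑ i, ((c i : ℝ)) ^ 2) := hkey2
      _ ≤ ρ ^ 2 * (a ^ 2 + s ^ 2) :=
          mul_le_mul_of_nonneg_left hC2le2 (by positivity)
  have ha2 : (R - Real.sqrt d) ^ 2 ≤ a ^ 2 := by
    rw [hLs]
    nlinarith [ha_low, hL0]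
  have hstep : X ^ 2 - ρ ^ 2 ≤ ρ ^ 2 * s ^ 2 / a ^ 2 := by
    rw [le_div_iff₀ (by positivity : (0:ℝ) < a ^ 2)]
    nlinarith [hfin]
  have hstep2 : ρ ^ 2 * s ^ 2 / a ^ 2 ≤ ρ ^ 2 * s ^ 2 / (R - Real.sqrt d) ^ 2 := by
    have hq : (0:ℝ) < (R - Real.sqrt d) ^ 2 := by
      rw [hLs]; positivity
    exact div_le_div_of_nonneg_left (by positivity) hq ha2
  have hrhs : (ρ * s / (R - Real.sqrt d)) ^ 2 = ρ ^ 2 * s ^ 2 / (R - Real.sqrt d) ^ 2 := by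
    rw [div_pow, mul_pow]
  rw [← hX2]
  linarith [hstep, hstep2, hrhs]

set_option maxHeartbeats 1000000 in
theorem stmt_13 (d : ℕ) (hd : 2 ≤ d) (μ : ℝ) (hμ0 : 0 ≤ μ) (hμ1 : μ < 1) :
    ∃ N : ℕ, ∀ n : ℕ, N ≤ n →
      ∀ b : Fin d → ℤ, IsPrimitiveShort d ((d : ℝ) * (n : ℝ) ^ (1 - μ)) b →
        ∀ x y : Fin d → ℝ,
          InCircumPolytope d ((d : ℝ) * (n : ℝ) ^ (1 - μ)) (Real.sqrt d / 2 * n) x →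
          InCircumPolytope d ((d : ℝ) * (n : ℝ) ^ (1 - μ)) (Real.sqrt d / 2 * n) y →
          (∑ i, (b i : ℝ) * x i) =
            Real.sqrt d / 2 * n * Real.sqrt (∑ i, ((b i : ℝ)) ^ 2) →
          (∑ i, (b i : ℝ) * y i) =
            Real.sqrt d / 2 * n * Real.sqrt (∑ i, ((b i : ℝ)) ^ 2) →
          Real.sqrt (∑ i, (x i - y i) ^ 2) < (n : ℝ) ^ μ := by
  refine ⟨⌈(2 : ℝ) ^ ((1 : ℝ) / (1 - μ))⌉₊ + 1, ?_⟩
  intro n hn b hb x y hx hy hfx hfy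
  have h1μ : (0 : ℝ) < 1 - μ := by linarith
  have hn1 : (1 : ℝ) ≤ (n : ℝ) := by
    have : 1 ≤ n := le_trans (Nat.le_add_left 1 _) hn
    exact_mod_cast this
  have hn0 : (0 : ℝ) < (n : ℝ) := by linarith
  have h2n : (2 : ℝ) ≤ (n : ℝ) ^ (1 - μ) := by
    have hcn : ((2 : ℝ) ^ ((1 : ℝ) / (1 - μ))) ≤ (n : ℝ) := by
      have h1 : ((⌈(2 : ℝ) ^ ((1 : ℝ) / (1 - μ))⌉₊ : ℕ) : ℝ) ≤ (n : ℝ) := by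
        exact_mod_cast le_trans (Nat.le_succ _) hn
      exact le_trans (Nat.le_ceil _) h1
    have hexp : (1 : ℝ) / (1 - μ) * (1 - μ) = 1 := by field_simp
    calc (2 : ℝ) = ((2 : ℝ) ^ ((1 : ℝ) / (1 - μ))) ^ (1 - μ) := by
          rw [← Real.rpow_mul (by norm_num), hexp, Real.rpow_one]
      _ ≤ (n : ℝ) ^ (1 - μ) := Real.rpow_le_rpow (by positivity) hcn h1μ.le
  have hd2 : (2 : ℝ) ≤ (d : ℝ) := by exact_mod_cast hd
  have hd0' : (0 : ℝ) ≤ Real.sqrt d := Real.sqrt_nonneg _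
  have hsd : Real.sqrt d < (d : ℝ) :=
    (Real.sqrt_lt' (by linarith)).mpr (by nlinarith)
  set R : ℝ := (d : ℝ) * (n : ℝ) ^ (1 - μ) with hRdef
  set ρ : ℝ := Real.sqrt d / 2 * (n : ℝ) with hρdef
  have hRd : Real.sqrt d < R := by
    calc Real.sqrt d < (d : ℝ) := hsd
      _ ≤ R := by
          rw [hRdef]
          exact le_mul_of_one_le_right (by linarith) (by linarith)
  have hRdpos : (0 : ℝ) < R - Real.sqrt d := by linarith
  have hsdpos : (0 : ℝ) < Real.sqrt d := Real.sqrt_pos.mpr (by linarith)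
  have hρ0 : (0 : ℝ) < ρ := by rw [hρdef]; positivity
  obtain ⟨hb0, hbgcd, hbR⟩ := hb
  set B : ℝ := Real.sqrt (∑ i, ((b i : ℝ)) ^ 2) with hBdef
  have hBpos : (0 : ℝ) < B := by
    rw [hBdef]
    apply Real.sqrt_pos.mpr
    obtain ⟨i0, hi0⟩ := Function.ne_iff.mp hb0
    refine Finset.sum_pos' (fun i _ => sq_nonneg _) ⟨i0, Finset.mem_univ _, ?_⟩
    have hne : ((b i0 : ℝ)) ≠ 0 := Int.cast_ne_zero.mpr hi0
    exact lt_of_le_of_ne (sq_nonneg _) (Ne.symm (pow_ne_zero 2 hne))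
  -- lower bound on norms of x and y
  have hXx : ρ ≤ Real.sqrt (∑ i, x i ^ 2) := by
    have hcs := cs_aux (fun i => ((b i : ℝ))) x
    rw [hfx, ← hBdef] at hcs
    nlinarith [hcs, hBpos]
  have hXy : ρ ≤ Real.sqrt (∑ i, y i ^ 2) := by
    have hcs := cs_aux (fun i => ((b i : ℝ))) y
    rw [hfy, ← hBdef] at hcs
    nlinarith [hcs, hBpos]
  have hXxpos : (0 : ℝ) < Real.sqrt (∑ i, x i ^ 2) := lt_of_lt_of_le hρ0 hXx
  have hXypos : (0 : ℝ) < Real.sqrt (∑ i, y i ^ 2) := lt_of_lt_of_le hρ0 hXy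
  set T : ℝ := ρ * (Real.sqrt d / 2) / (R - Real.sqrt d) with hTdef
  have hT0 : (0 : ℝ) ≤ T := by
    rw [hTdef]
    exact div_nonneg (by positivity) hRdpos.le
  have hnx := norm_bound (d := d) hρ0.le (fun c hc hcR => constraint_all hx c hc hcR)
    hXxpos hRd
  have hny := norm_bound (d := d) hρ0.le (fun c hc hcR => constraint_all hy c hc hcR)
    hXypos hRd
  rw [← hTdef] at hnx hny
  -- tangent point
  set z : Fin d → ℝ := fun i => ρ * ((b i : ℝ)) / B with hzdef
  have hB2 : B ^ 2 = ∑ i, ((b i : ℝ)) ^ 2 := by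
    rw [hBdef]; exact Real.sq_sqrt (by positivity)
  have hzx : (∑ i, (x i - z i) ^ 2) = (∑ i, x i ^ 2) - ρ ^ 2 := by
    have hexp : ∀ i, (x i - z i) ^ 2
        = x i ^ 2 - (2 * ρ / B) * ((b i : ℝ) * x i) + (ρ / B) ^ 2 * ((b i : ℝ)) ^ 2 := by
      intro i
      rw [hzdef]
      field_simp
      ring
    calc (∑ i, (x i - z i) ^ 2)
        = ∑ i, (x i ^ 2 - (2 * ρ / B) * ((b i : ℝ) * x i)
            + (ρ / B) ^ 2 * ((b i : ℝ)) ^ 2) :=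
          Finset.sum_congr rfl fun i _ => hexp i
      _ = (∑ i, x i ^ 2) - (2 * ρ / B) * (∑ i, (b i : ℝ) * x i)
            + (ρ / B) ^ 2 * (∑ i, ((b i : ℝ)) ^ 2) := by
          rw [Finset.sum_add_distrib, Finset.sum_sub_distrib,
            ← Finset.mul_sum, ← Finset.mul_sum]
      _ = (∑ i, x i ^ 2) - ρ ^ 2 := by
          rw [hfx, ← hB2]
          field_simp
          ring
  have hzy : (∑ i, (y i - z i) ^ 2) = (∑ i, y i ^ 2) - ρ ^ 2 := by
    have hexp : ∀ i, (y i - z i) ^ 2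
        = y i ^ 2 - (2 * ρ / B) * ((b i : ℝ) * y i) + (ρ / B) ^ 2 * ((b i : ℝ)) ^ 2 := by
      intro i
      rw [hzdef]
      field_simp
      ring
    calc (∑ i, (y i - z i) ^ 2)
        = ∑ i, (y i ^ 2 - (2 * ρ / B) * ((b i : ℝ) * y i)
            + (ρ / B) ^ 2 * ((b i : ℝ)) ^ 2) :=
          Finset.sum_congr rfl fun i _ => hexp i
      _ = (∑ i, y i ^ 2) - (2 * ρ / B) * (∑ i, (b i : ℝ) * y i)
            + (ρ / B) ^ 2 * (∑ i, ((b i : ℝ)) ^ 2) := by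
          rw [Finset.sum_add_distrib, Finset.sum_sub_distrib,
            ← Finset.mul_sum, ← Finset.mul_sum]
      _ = (∑ i, y i ^ 2) - ρ ^ 2 := by
          rw [hfy, ← hB2]
          field_simp
          ring
  have hdx : Real.sqrt (∑ i, (x i - z i) ^ 2) ≤ T := by
    calc Real.sqrt (∑ i, (x i - z i) ^ 2) ≤ Real.sqrt (T ^ 2) := by
          apply Real.sqrt_le_sqrt
          rw [hzx]
          linarith [hnx]
      _ = T := Real.sqrt_sq hT0
  have hdy : Real.sqrt (∑ i, (y i - z i) ^ 2) ≤ T := by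
    calc Real.sqrt (∑ i, (y i - z i) ^ 2) ≤ Real.sqrt (T ^ 2) := by
          apply Real.sqrt_le_sqrt
          rw [hzy]
          linarith [hny]
      _ = T := Real.sqrt_sq hT0
  have htri := tri_aux x y z
  have hswap : (∑ i, (z i - y i) ^ 2) = ∑ i, (y i - z i) ^ 2 :=
    Finset.sum_congr rfl fun i _ => by ring
  rw [hswap] at htri
  -- final numeric bound : 2 * T < n ^ μ
  have hdd : Real.sqrt d * Real.sqrt d = (d : ℝ) := Real.mul_self_sqrt (by positivity)
  have h2T : 2 * T = ((d : ℝ) * (n : ℝ) / 2) / (R - Real.sqrt d) := by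
    rw [hTdef, hρdef,
      show Real.sqrt d / 2 * (n : ℝ) * (Real.sqrt d / 2) = (d : ℝ) * (n : ℝ) / 4 from by
        linear_combination (n : ℝ) / 4 * hdd]
    ring
  have hmul : (n : ℝ) ^ μ * (n : ℝ) ^ (1 - μ) = (n : ℝ) := by
    rw [← Real.rpow_add hn0, show μ + (1 - μ) = 1 by ring, Real.rpow_one]
  have hnμpos : (0 : ℝ) < (n : ℝ) ^ μ := Real.rpow_pos_of_pos hn0 μ
  have hnμ : (n : ℝ) ^ μ * 2 ≤ (n : ℝ) := by
    calc (n : ℝ) ^ μ * 2 ≤ (n : ℝ) ^ μ * (n : ℝ) ^ (1 - μ) := by nlinarith [h2n, hnμpos]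
      _ = (n : ℝ) := hmul
  have hRexp : (n : ℝ) ^ μ * (R - Real.sqrt d)
      = (d : ℝ) * (n : ℝ) - Real.sqrt d * (n : ℝ) ^ μ := by
    rw [hRdef]
    calc (n : ℝ) ^ μ * ((d : ℝ) * (n : ℝ) ^ (1 - μ) - Real.sqrt d)
        = (d : ℝ) * ((n : ℝ) ^ μ * (n : ℝ) ^ (1 - μ)) - Real.sqrt d * (n : ℝ) ^ μ := by
          ring
      _ = (d : ℝ) * (n : ℝ) - Real.sqrt d * (n : ℝ) ^ μ := by rw [hmul]
  have hfinal : 2 * T < (n : ℝ) ^ μ := by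
    rw [h2T, div_lt_iff₀ hRdpos, hRexp]
    nlinarith [mul_nonneg hd0' (by linarith : (0:ℝ) ≤ (n : ℝ) - (n : ℝ) ^ μ * 2),
      mul_pos (by linarith : (0:ℝ) < (d : ℝ) - Real.sqrt d) hn0]
  calc Real.sqrt (∑ i, (x i - y i) ^ 2)
      ≤ Real.sqrt (∑ i, (x i - z i) ^ 2) + Real.sqrt (∑ i, (y i - z i) ^ 2) := htri
    _ ≤ T + T := add_le_add hdx hdy
    _ = 2 * T := by ring
    _ < (n : ℝ) ^ μ := hfinal
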